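/- Let a > 0, μ > 0, and let f, S : [0, a] → ℝ be continuous with f(0) ≠ 0, where S attains its minimum over [0,a] only at 0, S is C¹ on [0, δ₀] for some δ₀ ∈ (0, a], and S'(0) > 0. Then ∫_0^a x^{μ-1} f(x) e^{-u S(x)} dx ~ Γ(μ) f(0) S'(0)^{-μ} u^{-μ} e^{-u S(0)} as u → ∞. -/

import Mathlib

open Filter Asymptotics Set MeasureTheory

section aux

lemma gammaTrunc_tendsto {mu : ℝ} (hmu : 0 < mu) :
    Filter.Tendsto (fun T : ℝ => ∫ t in (0:ℝ)..T, Real.exp (-t) * t ^ (mu - 1)) atTop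
      (nhds (Real.Gamma mu)) := by
  rw [Real.Gamma_eq_integral hmu]
  exact intervalIntegral_tendsto_integral_Ioi 0 (Real.GammaIntegral_convergent hmu) tendsto_id

lemma gammaTrunc_le {mu : ℝ} (hmu : 0 < mu) {T : ℝ} (hT : 0 ≤ T) :
    ∫ t in (0:ℝ)..T, Real.exp (-t) * t ^ (mu - 1) ≤ Real.Gamma mu := by
  rw [Real.Gamma_eq_integral hmu, intervalIntegral.integral_of_le hT]
  refine setIntegral_mono_set (Real.GammaIntegral_convergent hmu) ?_
    (HasSubset.Subset.eventuallyLE Ioc_subset_Ioi_self)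
  filter_upwards [ae_restrict_mem measurableSet_Ioi] with t ht
  have h : (0:ℝ) < t := ht
  positivity

lemma subst_int {mu : ℝ} {b δ : ℝ} (hb : 0 < b) (hδ : 0 ≤ δ) :
    ∫ x in (0:ℝ)..δ, x ^ (mu - 1) * Real.exp (-(b * x))
      = b ^ (-mu) * ∫ t in (0:ℝ)..(b * δ), Real.exp (-t) * t ^ (mu - 1) := by
  have h1 : Set.EqOn (fun x => x ^ (mu - 1) * Real.exp (-(b * x)))
      (fun x => b ^ (-(mu-1)) * (Real.exp (-(b*x)) * (b*x) ^ (mu - 1)))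
      (Set.uIcc (0:ℝ) δ) := by
    intro x hx
    rw [Set.uIcc_of_le hδ] at hx
    simp only
    rw [Real.mul_rpow hb.le hx.1, Real.rpow_neg hb.le]
    have : b ^ (mu - 1) ≠ 0 := (Real.rpow_pos_of_pos hb _).ne'
    field_simp
  rw [intervalIntegral.integral_congr h1, intervalIntegral.integral_const_mul,
    intervalIntegral.integral_comp_mul_left (fun t => Real.exp (-t) * t ^ (mu-1)) hb.ne',
    mul_zero, smul_eq_mul, ← mul_assoc]
  congr 1
  rw [← Real.rpow_neg_one b, ← Real.rpow_add hb]
  congr 1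
  ring

lemma linear_bound {S : ℝ → ℝ} {δ₀ δ ε : ℝ} (hδ : 0 < δ) (hδδ₀ : δ ≤ δ₀)
    (hC1 : ContDiffOn ℝ 1 S (Set.Icc 0 δ₀))
    (hφ : ∀ x ∈ Set.Icc (0:ℝ) δ,
      |derivWithin S (Set.Icc 0 δ₀) x - derivWithin S (Set.Icc 0 δ₀) 0| ≤ ε)
    {x : ℝ} (hx : x ∈ Set.Icc (0:ℝ) δ) :
    |S x - S 0 - derivWithin S (Set.Icc 0 δ₀) 0 * x| ≤ ε * x := by
  set A := derivWithin S (Set.Icc 0 δ₀) 0 with hA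
  have hsub : Set.Icc (0:ℝ) δ ⊆ Set.Icc 0 δ₀ := Set.Icc_subset_Icc le_rfl hδδ₀
  have hSd : DifferentiableOn ℝ S (Set.Icc 0 δ₀) := hC1.differentiableOn one_ne_zero
  set g : ℝ → ℝ := fun y => S y - A * y with hg
  have hgd : DifferentiableOn ℝ g (Set.Icc 0 δ) :=
    (hSd.mono hsub).sub ((differentiable_id.const_mul A).differentiableOn)
  have hbound : ∀ y ∈ Set.Icc (0:ℝ) δ, ‖derivWithin g (Set.Icc 0 δ) y‖ ≤ ε := by
    intro y hy
    have hu : UniqueDiffWithinAt ℝ (Set.Icc (0:ℝ) δ) y := (uniqueDiffOn_Icc hδ) y hy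
    have h1 : derivWithin g (Set.Icc 0 δ) y = derivWithin S (Set.Icc 0 δ) y - A := by
      have hd : HasDerivWithinAt g (derivWithin S (Set.Icc 0 δ) y - A) (Set.Icc 0 δ) y := by
        have hs' := ((hSd.mono hsub) y hy).hasDerivWithinAt
        have hl : HasDerivWithinAt (fun y => A * y) A (Set.Icc (0:ℝ) δ) y := by
          simpa using ((hasDerivAt_id y).const_mul A).hasDerivWithinAt (s := Set.Icc (0:ℝ) δ)
        exact hs'.sub hl
      exact hd.derivWithin hu
    have h2 : derivWithin S (Set.Icc 0 δ) y = derivWithin S (Set.Icc 0 δ₀) y :=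
      derivWithin_subset hsub hu (hSd y (hsub hy))
    rw [h1, h2, Real.norm_eq_abs]
    exact hφ y hy
  have h0 : (0:ℝ) ∈ Set.Icc (0:ℝ) δ := ⟨le_rfl, hδ.le⟩
  have hmv := Convex.norm_image_sub_le_of_norm_derivWithin_le hgd hbound (convex_Icc 0 δ) h0 hx
  rw [hg] at hmv
  simp only [Real.norm_eq_abs, mul_zero, sub_zero, sub_zero] at hmv
  calc |S x - S 0 - A * x| = |S x - A * x - S 0| := by ring_nf
    _ ≤ ε * |x| := hmv
    _ = ε * x := by rw [abs_of_nonneg hx.1]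

lemma II_rpow_mul {mu : ℝ} (hmu : 0 < mu) {p q : ℝ} {g : ℝ → ℝ}
    (hg : ContinuousOn g (Set.uIcc p q)) :
    IntervalIntegrable (fun x => x ^ (mu - 1) * g x) MeasureTheory.volume p q :=
  (intervalIntegral.intervalIntegrable_rpow' (by linarith)).mul_continuousOn hg

lemma small_mul' {x ε : ℝ} (hx : 0 ≤ x) (hε : 0 < ε) : x * (ε / (4 * (x + 1))) < ε / 4 := by
  have h1 : x / (x + 1) < 1 := (div_lt_one (by linarith)).2 (by linarith)
  have h2 : x * (ε / (4 * (x + 1))) = (x / (x + 1)) * (ε / 4) := by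
    rw [← mul_div_assoc, div_mul_div_comm, mul_comm (x+1) 4]
  rw [h2]
  calc (x/(x+1)) * (ε/4) < 1 * (ε/4) := mul_lt_mul_of_pos_right h1 (by positivity)
    _ = ε/4 := one_mul _

end aux

set_option maxHeartbeats 2000000 in
theorem watson_laplace_asymptotics
    (a mu δ₀ : ℝ) (ha : 0 < a) (hmu : 0 < mu) (hδ₀ : δ₀ ∈ Set.Ioc (0:ℝ) a)
    (f S : ℝ → ℝ)
    (hf : ContinuousOn f (Set.Icc 0 a)) (hS : ContinuousOn S (Set.Icc 0 a))
    (hf0 : f 0 ≠ 0)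
    (hmin : ∀ x ∈ Set.Icc (0:ℝ) a, x ≠ 0 → S 0 < S x)
    (hC1 : ContDiffOn ℝ 1 S (Set.Icc 0 δ₀))
    (hS'pos : 0 < derivWithin S (Set.Icc 0 δ₀) 0) :
    (fun u : ℝ => ∫ x in (0:ℝ)..a, x ^ (mu - 1) * f x * Real.exp (-u * S x))
      ~[atTop] fun u =>
        Real.Gamma mu * f 0 * (derivWithin S (Set.Icc 0 δ₀) 0) ^ (-mu) *
          u ^ (-mu) * Real.exp (-u * S 0) := by
  obtain ⟨hδ₀pos, hδ₀a⟩ := hδ₀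
  set A := derivWithin S (Set.Icc 0 δ₀) 0 with hA
  have hΓ : 0 < Real.Gamma mu := Real.Gamma_pos_of_pos hmu
  have hApow : 0 < A ^ (-mu) := Real.rpow_pos_of_pos hS'pos _
  set C : ℝ := Real.Gamma mu * f 0 * A ^ (-mu) with hCdef
  have hCne : C ≠ 0 := mul_ne_zero (mul_ne_zero hΓ.ne' hf0) hApow.ne'
  set I : ℝ → ℝ := fun u => ∫ x in (0:ℝ)..a, x ^ (mu - 1) * f x * Real.exp (-u * S x) with hI
  have key : Filter.Tendsto (fun u => u ^ mu * Real.exp (u * S 0) * I u) atTop (nhds C) := by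
    have hφcont : ContinuousOn (derivWithin S (Set.Icc 0 δ₀)) (Set.Icc 0 δ₀) :=
      hC1.continuousOn_derivWithin (uniqueDiffOn_Icc hδ₀pos) le_rfl
    rw [Metric.tendsto_nhds]
    intro ε hε
    set ε' := ε / (4 * (|f 0| + 1)) with hε'def
    have hε' : 0 < ε' := by
      rw [hε'def]; positivity
    set B := A ^ (-mu) * Real.Gamma mu + ε' with hBdef
    have hB : 0 < B := by rw [hBdef]; exact add_pos (mul_pos hApow hΓ) hε'
    set ε₁ := ε / (4 * (B + 1)) with hε₁def
    have hε₁ : 0 < ε₁ := by rw [hε₁def]; exact div_pos hε (by linarith)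
    obtain ⟨r, hr, hrc⟩ : ∃ r > 0, ∀ c : ℝ, |c - A| < r →
        |c ^ (-mu) * Real.Gamma mu - A ^ (-mu) * Real.Gamma mu| < ε' / 2 := by
      have hc : ContinuousAt (fun c : ℝ => c ^ (-mu) * Real.Gamma mu) A :=
        (Real.continuousAt_rpow_const A (-mu) (Or.inl hS'pos.ne')).mul continuousAt_const
      obtain ⟨r, hr, h⟩ := Metric.continuousAt_iff.mp hc (ε'/2) (by positivity)
      refine ⟨r, hr, fun c hc' => ?_⟩
      have := h (show dist c A < r by rwa [Real.dist_eq])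
      rwa [Real.dist_eq] at this
    set ε₂ := min (r/2) (A/2) with hε₂def
    have hε₂pos : 0 < ε₂ := lt_min (by positivity) (by positivity)
    have hε₂A : ε₂ ≤ A/2 := min_le_right _ _
    have hε₂r : ε₂ < r := (min_le_left _ _).trans_lt (by linarith)
    set clo := A - ε₂ with hclodef
    set chi := A + ε₂ with hchidef
    have hclo : 0 < clo := by rw [hclodef]; linarith
    have hchi : 0 < chi := by rw [hchidef]; linarith
    have hchiA : A ≤ chi := by rw [hchidef]; linarith
    have hlo : |clo ^ (-mu) * Real.Gamma mu - A ^ (-mu) * Real.Gamma mu| < ε' / 2 := by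
      refine hrc clo ?_
      rw [hclodef, show A - ε₂ - A = -ε₂ by ring, abs_neg, abs_of_pos hε₂pos]
      exact hε₂r
    have hhi : |chi ^ (-mu) * Real.Gamma mu - A ^ (-mu) * Real.Gamma mu| < ε' / 2 := by
      refine hrc chi ?_
      rw [hchidef, show A + ε₂ - A = ε₂ by ring, abs_of_pos hε₂pos]
      exact hε₂r
    set η := ε' / (2 * A ^ (-mu)) with hηdef
    have hη : 0 < η := by rw [hηdef]; positivity
    obtain ⟨δ, hδpos, hδδ₀, hfδ, hφδ⟩ : ∃ δ, 0 < δ ∧ δ ≤ δ₀ ∧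
        (∀ x ∈ Set.Icc (0:ℝ) δ, |f x - f 0| ≤ ε₁) ∧
        (∀ x ∈ Set.Icc (0:ℝ) δ, |derivWithin S (Set.Icc 0 δ₀) x - A| ≤ ε₂) := by
      have e1 : ∀ᶠ x in nhdsWithin 0 (Set.Icc (0:ℝ) a), |f x - f 0| ≤ ε₁ := by
        have ht : Filter.Tendsto f (nhdsWithin 0 (Set.Icc (0:ℝ) a)) (nhds (f 0)) :=
          hf 0 ⟨le_rfl, ha.le⟩
        filter_upwards [ht (Metric.closedBall_mem_nhds (f 0) hε₁)] with x hx
        simpa [Real.dist_eq] using hx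
      have e2 : ∀ᶠ x in nhdsWithin 0 (Set.Icc (0:ℝ) δ₀),
          |derivWithin S (Set.Icc 0 δ₀) x - A| ≤ ε₂ := by
        have ht := hφcont 0 ⟨le_rfl, hδ₀pos.le⟩
        filter_upwards [ht (Metric.closedBall_mem_nhds A hε₂pos)] with x hx
        simpa [Real.dist_eq] using hx
      rw [nhdsWithin_Icc_eq_nhdsGE ha] at e1
      rw [nhdsWithin_Icc_eq_nhdsGE hδ₀pos] at e2
      have e3 := e1.and e2
      rw [Filter.eventually_iff, mem_nhdsGE_iff_exists_Icc_subset] at e3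
      obtain ⟨δ', hδ', hsubδ⟩ := e3
      refine ⟨min δ' δ₀, lt_min hδ' hδ₀pos, min_le_right _ _, ?_, ?_⟩
      · exact fun x hx => (hsubδ ⟨hx.1, hx.2.trans (min_le_left _ _)⟩).1
      · exact fun x hx => (hsubδ ⟨hx.1, hx.2.trans (min_le_left _ _)⟩).2
    have hδa : δ ≤ a := hδδ₀.trans hδ₀a
    have hSb : ∀ x ∈ Set.Icc (0:ℝ) δ, clo * x ≤ S x - S 0 ∧ S x - S 0 ≤ chi * x := by
      intro x hx
      have h := linear_bound hδpos hδδ₀ hC1 hφδ hx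
      rw [abs_le] at h
      rw [hclodef, hchidef]
      constructor
      · linarith only [h.1]
      · linarith only [h.2]
    obtain ⟨x₀, hx₀mem, hx₀min⟩ := isCompact_Icc.exists_isMinOn (Set.nonempty_Icc.2 hδa)
      ((hS.mono (Set.Icc_subset_Icc (by linarith) le_rfl)).sub
        (continuousOn_const (c := S 0)))
    set m := S x₀ - S 0 with hmdef
    have hmpos : 0 < m := by
      have hx0a : x₀ ∈ Set.Icc (0:ℝ) a := ⟨by linarith [hx₀mem.1], hx₀mem.2⟩
      have hne : x₀ ≠ 0 := by
        intro h
        rw [h] at hx₀mem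
        linarith [hx₀mem.1]
      rw [hmdef]
      linarith only [hmin x₀ hx0a hne]
    obtain ⟨M, hM⟩ := (isCompact_Icc (a := δ) (b := a)).exists_bound_of_continuousOn
      (f := fun x => x ^ (mu - 1) * f x)
      (by
        apply ContinuousOn.mul
        · intro x hx
          exact (Real.continuousAt_rpow_const x (mu-1)
            (Or.inl (lt_of_lt_of_le hδpos hx.1).ne')).continuousWithinAt
        · exact hf.mono (Set.Icc_subset_Icc (by linarith) le_rfl))
    have hMnn : 0 ≤ M := le_trans (norm_nonneg _) (hM δ ⟨le_rfl, hδa⟩)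
    have evGt : ∀ᶠ u in atTop, Real.Gamma mu - η <
        ∫ t in (0:ℝ)..(u * chi * δ), Real.exp (-t) * t ^ (mu - 1) := by
      have htt : Filter.Tendsto (fun u : ℝ => u * chi * δ) atTop atTop :=
        (tendsto_id.atTop_mul_const hchi).atTop_mul_const hδpos
      exact ((gammaTrunc_tendsto hmu).comp htt).eventually_const_lt (by linarith)
    have evTail : ∀ᶠ u in atTop,
        u ^ mu * Real.exp (-m * u) * ((a - δ) * M) < ε/4 := by
      have h0 := (tendsto_rpow_mul_exp_neg_mul_atTop_nhds_zero mu m hmpos).mul_const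
        ((a - δ) * M)
      rw [zero_mul] at h0
      exact h0.eventually_lt_const (by positivity)
    filter_upwards [eventually_ge_atTop (1:ℝ), evGt, evTail] with u hu1 hGt hTail
    have hu : (0:ℝ) < u := lt_of_lt_of_le one_pos hu1
    have hupos : (0:ℝ) < u ^ mu := Real.rpow_pos_of_pos hu _
    rw [Real.dist_eq]
    set g : ℝ → ℝ := fun x => x ^ (mu - 1) * f x * Real.exp (-u * (S x - S 0)) with hgdef
    set k : ℝ → ℝ := fun x => x ^ (mu - 1) * Real.exp (-u * (S x - S 0)) with hkdef
    have hsub0δ : Set.Icc (0:ℝ) δ ⊆ Set.Icc 0 a := Set.Icc_subset_Icc le_rfl hδa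
    have hsubδa : Set.Icc δ a ⊆ Set.Icc (0:ℝ) a := Set.Icc_subset_Icc hδpos.le le_rfl
    have cexp : ∀ p q : ℝ, Set.Icc p q ⊆ Set.Icc (0:ℝ) a →
        ContinuousOn (fun x => Real.exp (-u * (S x - S 0))) (Set.Icc p q) :=
      fun p q hpq => Real.continuous_exp.comp_continuousOn
        (continuousOn_const.mul ((hS.mono hpq).sub continuousOn_const))
    have hIg1 : IntervalIntegrable g volume 0 δ := by
      rw [hgdef]
      simp only [mul_assoc]
      refine II_rpow_mul hmu ?_
      rw [Set.uIcc_of_le hδpos.le]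
      exact (hf.mono hsub0δ).mul (cexp 0 δ hsub0δ)
    have hIg2 : IntervalIntegrable g volume δ a := by
      rw [hgdef]
      simp only [mul_assoc]
      refine II_rpow_mul hmu ?_
      rw [Set.uIcc_of_le hδa]
      exact (hf.mono hsubδa).mul (cexp δ a hsubδa)
    have hIk : IntervalIntegrable k volume 0 δ := by
      rw [hkdef]
      refine II_rpow_mul hmu ?_
      rw [Set.uIcc_of_le hδpos.le]
      exact cexp 0 δ hsub0δ
    have hIklo : IntervalIntegrable (fun x => x ^ (mu-1) * Real.exp (-(u * chi * x)))
        volume 0 δ := II_rpow_mul hmu (Continuous.continuousOn (by fun_prop))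
    have hIkhi : IntervalIntegrable (fun x => x ^ (mu-1) * Real.exp (-(u * clo * x)))
        volume 0 δ := II_rpow_mul hmu (Continuous.continuousOn (by fun_prop))
    have hIr : IntervalIntegrable
        (fun x => x ^ (mu-1) * ((f x - f 0) * Real.exp (-u * (S x - S 0)))) volume 0 δ := by
      refine II_rpow_mul hmu ?_
      rw [Set.uIcc_of_le hδpos.le]
      exact ((hf.mono hsub0δ).sub continuousOn_const).mul (cexp 0 δ hsub0δ)
    set K := ∫ x in (0:ℝ)..δ, k x with hKdef
    set R := ∫ x in (0:ℝ)..δ, x ^ (mu-1) * ((f x - f 0) * Real.exp (-u * (S x - S 0)))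
      with hRdef
    set T := ∫ x in δ..a, g x with hTdef
    have hmain : Real.exp (u * S 0) * I u = (f 0 * K + R) + T := by
      have h1 : Real.exp (u * S 0) * I u = ∫ x in (0:ℝ)..a, g x := by
        rw [hI]
        simp only
        rw [← intervalIntegral.integral_const_mul]
        refine intervalIntegral.integral_congr fun x hx => ?_
        rw [hgdef]
        simp only
        rw [show -u * (S x - S 0) = u * S 0 + -u * S x by ring, Real.exp_add]
        ring
      have h2 : (∫ x in (0:ℝ)..a, g x) = (∫ x in (0:ℝ)..δ, g x) + T :=
        (intervalIntegral.integral_add_adjacent_intervals hIg1 hIg2).symm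
      have h3 : (∫ x in (0:ℝ)..δ, g x) = f 0 * K + R := by
        have hcg : (∫ x in (0:ℝ)..δ, g x) = ∫ x in (0:ℝ)..δ,
            (f 0 * k x + x ^ (mu-1) * ((f x - f 0) * Real.exp (-u * (S x - S 0)))) := by
          refine intervalIntegral.integral_congr fun x hx => ?_
          rw [hgdef, hkdef]
          simp only
          ring
        rw [hcg, intervalIntegral.integral_add (hIk.const_mul (f 0)) hIr,
          intervalIntegral.integral_const_mul, hKdef, hRdef]
      rw [h1, h2, h3]
    have hKnonneg : 0 ≤ K := by
      rw [hKdef]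
      refine intervalIntegral.integral_nonneg hδpos.le fun x hx => ?_
      rw [hkdef]
      have := hx.1
      positivity
    have hsubhi : (∫ x in (0:ℝ)..δ, x ^ (mu-1) * Real.exp (-(u * clo * x)))
        = (u * clo) ^ (-mu) * ∫ t in (0:ℝ)..(u * clo * δ), Real.exp (-t) * t ^ (mu-1) :=
      subst_int (mul_pos hu hclo) hδpos.le
    have hsublo : (∫ x in (0:ℝ)..δ, x ^ (mu-1) * Real.exp (-(u * chi * x)))
        = (u * chi) ^ (-mu) * ∫ t in (0:ℝ)..(u * chi * δ), Real.exp (-t) * t ^ (mu-1) :=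
      subst_int (mul_pos hu hchi) hδpos.le
    have hpowlo : u ^ mu * (u * clo) ^ (-mu) = clo ^ (-mu) := by
      rw [Real.mul_rpow hu.le hclo.le, ← mul_assoc, ← Real.rpow_add hu]
      simp
    have hpowhi : u ^ mu * (u * chi) ^ (-mu) = chi ^ (-mu) := by
      rw [Real.mul_rpow hu.le hchi.le, ← mul_assoc, ← Real.rpow_add hu]
      simp
    have hKhi : u ^ mu * K ≤ clo ^ (-mu) * Real.Gamma mu := by
      have h1 : K ≤ ∫ x in (0:ℝ)..δ, x ^ (mu-1) * Real.exp (-(u * clo * x)) := by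
        rw [hKdef]
        refine intervalIntegral.integral_mono_on hδpos.le hIk hIkhi fun x hx => ?_
        rw [hkdef]
        simp only
        refine mul_le_mul_of_nonneg_left (Real.exp_le_exp.2 ?_) (Real.rpow_nonneg hx.1 _)
        have h := mul_le_mul_of_nonneg_left (hSb x hx).1 hu.le
        linarith only [h]
      calc u ^ mu * K ≤ u ^ mu * ((u * clo) ^ (-mu) *
            ∫ t in (0:ℝ)..(u * clo * δ), Real.exp (-t) * t ^ (mu-1)) := by
            rw [← hsubhi]; exact mul_le_mul_of_nonneg_left h1 hupos.le
        _ = clo ^ (-mu) * ∫ t in (0:ℝ)..(u * clo * δ), Real.exp (-t) * t ^ (mu-1) := by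
            rw [← mul_assoc, hpowlo]
        _ ≤ clo ^ (-mu) * Real.Gamma mu := by
            refine mul_le_mul_of_nonneg_left (gammaTrunc_le hmu ?_) (Real.rpow_nonneg hclo.le _)
            positivity
    have hKlo : chi ^ (-mu) * (Real.Gamma mu - η) ≤ u ^ mu * K := by
      have h1 : (∫ x in (0:ℝ)..δ, x ^ (mu-1) * Real.exp (-(u * chi * x))) ≤ K := by
        rw [hKdef]
        refine intervalIntegral.integral_mono_on hδpos.le hIklo hIk fun x hx => ?_
        rw [hkdef]
        simp only
        refine mul_le_mul_of_nonneg_left (Real.exp_le_exp.2 ?_) (Real.rpow_nonneg hx.1 _)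
        have h := mul_le_mul_of_nonneg_left (hSb x hx).2 hu.le
        linarith only [h]
      calc chi ^ (-mu) * (Real.Gamma mu - η)
          ≤ chi ^ (-mu) * ∫ t in (0:ℝ)..(u * chi * δ), Real.exp (-t) * t ^ (mu-1) :=
            mul_le_mul_of_nonneg_left hGt.le (Real.rpow_nonneg hchi.le _)
        _ = u ^ mu * ((u * chi) ^ (-mu) *
            ∫ t in (0:ℝ)..(u * chi * δ), Real.exp (-t) * t ^ (mu-1)) := by
            rw [← mul_assoc, hpowhi]
        _ = u ^ mu * ∫ x in (0:ℝ)..δ, x ^ (mu-1) * Real.exp (-(u * chi * x)) := by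
            rw [← hsublo]
        _ ≤ u ^ mu * K := mul_le_mul_of_nonneg_left h1 hupos.le
    have hchiA' : chi ^ (-mu) ≤ A ^ (-mu) :=
      Real.rpow_le_rpow_of_nonpos hS'pos hchiA (neg_nonpos.2 hmu.le)
    have hηeq : A ^ (-mu) * η = ε' / 2 := by
      rw [hηdef]
      field_simp
    have hup : clo ^ (-mu) * Real.Gamma mu ≤ A ^ (-mu) * Real.Gamma mu + ε' / 2 := by
      have := abs_le.mp hlo.le
      linarith [this.1, this.2]
    have hlow : A ^ (-mu) * Real.Gamma mu - ε' / 2 ≤ chi ^ (-mu) * Real.Gamma mu := by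
      have := abs_le.mp hhi.le
      linarith [this.1, this.2]
    have hKest : |u ^ mu * K - A ^ (-mu) * Real.Gamma mu| ≤ ε' := by
      rw [abs_le]
      have h4 : chi ^ (-mu) * η ≤ A ^ (-mu) * η := mul_le_mul_of_nonneg_right hchiA' hη.le
      have h5 : chi ^ (-mu) * (Real.Gamma mu - η)
          = chi ^ (-mu) * Real.Gamma mu - chi ^ (-mu) * η := by ring
      constructor
      · linarith only [hKlo, h4, h5, hlow, hηeq]
      · linarith only [hKhi, hup, hε']
    have hKB : u ^ mu * K ≤ B := by
      rw [hBdef]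
      linarith only [hKhi, hup, hε']
    have hRb : |R| ≤ ε₁ * K := by
      have h1 : |R| ≤ ∫ x in (0:ℝ)..δ,
          |x ^ (mu-1) * ((f x - f 0) * Real.exp (-u * (S x - S 0)))| := by
        rw [hRdef]
        exact intervalIntegral.abs_integral_le_integral_abs hδpos.le
      have h2 : (∫ x in (0:ℝ)..δ,
          |x ^ (mu-1) * ((f x - f 0) * Real.exp (-u * (S x - S 0)))|)
          ≤ ∫ x in (0:ℝ)..δ, ε₁ * k x := by
        refine intervalIntegral.integral_mono_on hδpos.le hIr.abs
          (hIk.const_mul ε₁) fun x hx => ?_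
        rw [hkdef]
        simp only
        have h3 : |f x - f 0| ≤ ε₁ := hfδ x hx
        have hxp : (0:ℝ) ≤ x ^ (mu-1) := Real.rpow_nonneg hx.1 _
        have hep : (0:ℝ) < Real.exp (-u * (S x - S 0)) := Real.exp_pos _
        rw [abs_mul, abs_mul, abs_of_nonneg hxp, abs_of_pos hep]
        calc x ^ (mu-1) * (|f x - f 0| * Real.exp (-u * (S x - S 0)))
            ≤ x ^ (mu-1) * (ε₁ * Real.exp (-u * (S x - S 0))) :=
              mul_le_mul_of_nonneg_left (mul_le_mul_of_nonneg_right h3 hep.le) hxp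
          _ = ε₁ * (x ^ (mu-1) * Real.exp (-u * (S x - S 0))) := by ring
      have h3 : (∫ x in (0:ℝ)..δ, ε₁ * k x) = ε₁ * K := by
        rw [intervalIntegral.integral_const_mul, hKdef]
      linarith
    have hTb : |T| ≤ M * Real.exp (-m * u) * (a - δ) := by
      have hb : ∀ x ∈ Set.uIoc δ a, ‖g x‖ ≤ M * Real.exp (-m * u) := by
        intro x hx
        rw [Set.uIoc_of_le hδa] at hx
        have hxI : x ∈ Set.Icc δ a := ⟨hx.1.le, hx.2⟩
        have hb1 : ‖x ^ (mu-1) * f x‖ ≤ M := hM x hxI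
        have hb2 : Real.exp (-u * (S x - S 0)) ≤ Real.exp (-m * u) := by
          rw [Real.exp_le_exp]
          have hmx := hx₀min hxI
          simp only [Set.mem_setOf_eq, Pi.sub_apply] at hmx
          have h := mul_le_mul_of_nonneg_left hmx hu.le
          rw [hmdef]
          linarith only [h]
        rw [hgdef]
        simp only [Real.norm_eq_abs]
        rw [abs_mul]
        refine mul_le_mul ?_ ?_ (abs_nonneg _) hMnn
        · exact hb1
        · rw [abs_of_pos (Real.exp_pos _)]
          exact hb2
      have := intervalIntegral.norm_integral_le_of_norm_le_const hb
      rw [hTdef]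
      rw [Real.norm_eq_abs] at this
      calc |∫ x in δ..a, g x| ≤ M * Real.exp (-m * u) * |a - δ| := this
        _ = M * Real.exp (-m * u) * (a - δ) := by
            rw [abs_of_nonneg (by linarith : (0:ℝ) ≤ a - δ)]
    have hexpr : u ^ mu * Real.exp (u * S 0) * I u - C
        = f 0 * (u ^ mu * K - A ^ (-mu) * Real.Gamma mu) + u ^ mu * R + u ^ mu * T := by
      rw [mul_assoc, hmain, hCdef]
      ring
    have e1 : |f 0 * (u ^ mu * K - A ^ (-mu) * Real.Gamma mu)| ≤ |f 0| * ε' := by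
      rw [abs_mul]
      exact mul_le_mul_of_nonneg_left hKest (abs_nonneg _)
    have e2 : |u ^ mu * R| ≤ ε₁ * B := by
      rw [abs_mul, abs_of_pos hupos]
      calc u ^ mu * |R| ≤ u ^ mu * (ε₁ * K) := mul_le_mul_of_nonneg_left hRb hupos.le
        _ = ε₁ * (u ^ mu * K) := by ring
        _ ≤ ε₁ * B := mul_le_mul_of_nonneg_left hKB hε₁.le
    have e3 : |u ^ mu * T| < ε/4 := by
      rw [abs_mul, abs_of_pos hupos]
      calc u ^ mu * |T| ≤ u ^ mu * (M * Real.exp (-m * u) * (a - δ)) :=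
            mul_le_mul_of_nonneg_left hTb hupos.le
        _ = u ^ mu * Real.exp (-m * u) * ((a - δ) * M) := by ring
        _ < ε/4 := hTail
    have e4 : |f 0| * ε' < ε/4 := by
      rw [hε'def]
      exact small_mul' (abs_nonneg _) hε
    have e5 : ε₁ * B < ε/4 := by
      rw [mul_comm, hε₁def]
      exact small_mul' hB.le hε
    calc |u ^ mu * Real.exp (u * S 0) * I u - C|
        = |f 0 * (u ^ mu * K - A ^ (-mu) * Real.Gamma mu) + u ^ mu * R + u ^ mu * T| := by
          rw [hexpr]
      _ ≤ |f 0 * (u ^ mu * K - A ^ (-mu) * Real.Gamma mu)| + |u ^ mu * R| + |u ^ mu * T| :=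
          abs_add_three _ _ _
      _ < ε := by
          have h1 := e1.trans_lt e4
          have h2 := e2.trans_lt e5
          linarith only [h1, h2, e3, hε]
  rw [isEquivalent_iff_tendsto_one ?hne]
  case hne =>
    filter_upwards [eventually_gt_atTop (0:ℝ)] with u hu
    have h1 : (0:ℝ) < u ^ (-mu) := Real.rpow_pos_of_pos hu _
    have h2 : (0:ℝ) < Real.exp (-u * S 0) := Real.exp_pos _
    exact mul_ne_zero (mul_ne_zero hCne h1.ne') h2.ne'
  have h2 := key.div_const C
  rw [div_self hCne] at h2
  refine h2.congr' ?_
  filter_upwards [eventually_gt_atTop (0:ℝ)] with u hu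
  have hune : u ^ mu ≠ 0 := (Real.rpow_pos_of_pos hu _).ne'
  simp only [Pi.div_apply]
  rw [Real.rpow_neg hu.le, show -u * S 0 = -(u * S 0) by ring, Real.exp_neg]
  rw [hCdef]
  field_simp
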